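/- There exists a constant C(γ) > 0, depending only on γ, such that for all ρ > 0, m ∈ ℝ and ρ∞ > 0, the function m ↦ η̃(ρ, m) is differentiable and |∂_mη̃(ρ, m)| ≤ C(γ)(|ρ^θ − ρ∞^θ| + |m|/ρ), where η̃(ρ, m) = η̆(ρ, m) − c₀ρ∞^θ m is the relative entropy obtained from η̆ by subtracting its linearization at (ρ∞, 0). -/

import Mathlib

open Real MeasureTheory

/-- `θ = (γ − 1)/2`. -/
noncomputable def thetaExp (γ : ℝ) : ℝ := (γ - 1) / 2

/-- `λ = (3 − γ)/(2(γ − 1))`. -/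
noncomputable def lamExp (γ : ℝ) : ℝ := (3 - γ) / (2 * (γ - 1))

/-- The weak entropy of the isentropic Euler system with polytropic pressure, generated by `ψ`:
`η^ψ(ρ, u) = ρ ∫_{−1}^{1} ψ(u + ρ^θ s)(1 − s²)^λ ds`. -/
noncomputable def entropy (γ : ℝ) (ψ : ℝ → ℝ) (ρ u : ℝ) : ℝ :=
  ρ * ∫ s in (-1:ℝ)..1, ψ (u + ρ ^ thetaExp γ * s) * (1 - s ^ 2) ^ lamExp γ

/-- The weak entropy flux generated by `ψ`:
`q^ψ(ρ, u) = ρ ∫_{−1}^{1} (u + θρ^θ s) ψ(u + ρ^θ s)(1 − s²)^λ ds`. -/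
noncomputable def entropyFlux (γ : ℝ) (ψ : ℝ → ℝ) (ρ u : ℝ) : ℝ :=
  ρ * ∫ s in (-1:ℝ)..1,
    (u + thetaExp γ * ρ ^ thetaExp γ * s) * ψ (u + ρ ^ thetaExp γ * s) * (1 - s ^ 2) ^ lamExp γ

/-- The weak entropy `η̆ = η^ψ` generated by `ψ(s) = ½ s|s|`, in the conserved variables
`(ρ, m)` via `u = m/ρ`. -/
noncomputable def breveEntropyM (γ : ℝ) (ρ m : ℝ) : ℝ :=
  entropy γ (fun s => s * |s| / 2) ρ (m / ρ)

/-- `c₀ = ∫_{−1}^{1} |s|(1 − s²)^λ ds`. -/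
noncomputable def cZero (γ : ℝ) : ℝ := ∫ s in (-1:ℝ)..1, |s| * (1 - s ^ 2) ^ lamExp γ

/- ### Auxiliary lemmas -/

lemma lam_gt_neg_one {γ : ℝ} (hγ : 1 < γ) : -1 < lamExp γ := by
  unfold lamExp
  rw [lt_div_iff₀ (by linarith : (0:ℝ) < 2 * (γ - 1))]
  linarith

lemma measurable_rpow_const (r : ℝ) : Measurable fun x : ℝ => x ^ r := by
  apply measurable_of_continuousOn_compl_singleton (0:ℝ)
  intro x hx
  exact (Real.continuousAt_rpow_const x r
    (Or.inl (Set.mem_compl_singleton_iff.mp hx))).continuousWithinAt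

lemma measurable_w {γ : ℝ} : Measurable (fun s : ℝ => (1 - s ^ 2) ^ lamExp γ) :=
  (measurable_rpow_const (lamExp γ)).comp (measurable_const.sub (measurable_id.pow_const 2))

lemma mem_Ioc_of_uIoc {s : ℝ} (hs : s ∈ Set.uIoc (-1:ℝ) 1) : -1 < s ∧ s ≤ 1 := by
  rw [Set.uIoc_of_le (by norm_num : (-1:ℝ) ≤ 1)] at hs
  exact ⟨hs.1, hs.2⟩

lemma w_intble {γ : ℝ} (hγ : 1 < γ) :
    IntervalIntegrable (fun s : ℝ => (1 - s ^ 2) ^ lamExp γ) volume (-1) 1 := by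
  rcases le_or_gt 0 (lamExp γ) with hl | hl
  · apply IntervalIntegrable.mono_fun' (g := fun _ => (1:ℝ)) intervalIntegrable_const
      measurable_w.aestronglyMeasurable
    filter_upwards [ae_restrict_mem measurableSet_uIoc] with s hs
    obtain ⟨h1, h2⟩ := mem_Ioc_of_uIoc hs
    have h0 : 0 ≤ 1 - s ^ 2 := by nlinarith
    have h1' : 1 - s ^ 2 ≤ 1 := by nlinarith [sq_nonneg s]
    rw [Real.norm_eq_abs, abs_of_nonneg (rpow_nonneg h0 _)]
    exact rpow_le_one h0 h1' hl
  · have hg : IntervalIntegrable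
        (fun s : ℝ => (1 - s) ^ lamExp γ + (1 + s) ^ lamExp γ) volume (-1) 1 := by
      apply IntervalIntegrable.add
      · have h := (intervalIntegral.intervalIntegrable_rpow' (lam_gt_neg_one hγ) (a := 0) (b := 2)).comp_sub_left 1
        norm_num at h
        exact h.symm
      · have h := (intervalIntegral.intervalIntegrable_rpow' (lam_gt_neg_one hγ) (a := 0) (b := 2)).comp_add_right 1
        norm_num at h
        simpa [add_comm] using h
    apply IntervalIntegrable.mono_fun' hg measurable_w.aestronglyMeasurable
    filter_upwards [ae_restrict_mem measurableSet_uIoc] with s hs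
    obtain ⟨hm1, hp1⟩ := mem_Ioc_of_uIoc hs
    have h1 : 0 ≤ 1 - s := by linarith
    have h2 : 0 ≤ 1 + s := by linarith
    have h0 : 0 ≤ 1 - s ^ 2 := by nlinarith
    have hprod : (1 - s ^ 2) ^ lamExp γ = (1 - s) ^ lamExp γ * (1 + s) ^ lamExp γ := by
      rw [← mul_rpow h1 h2]; congr 1; ring
    rw [Real.norm_eq_abs, abs_of_nonneg (rpow_nonneg h0 _), hprod]
    rcases le_total s 0 with hs0 | hs0
    · have hle : (1 - s) ^ lamExp γ ≤ 1 :=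
        rpow_le_one_of_one_le_of_nonpos (by linarith) hl.le
      nlinarith [rpow_nonneg h2 (lamExp γ), rpow_nonneg h1 (lamExp γ)]
    · have hle : (1 + s) ^ lamExp γ ≤ 1 :=
        rpow_le_one_of_one_le_of_nonpos (by linarith) hl.le
      nlinarith [rpow_nonneg h2 (lamExp γ), rpow_nonneg h1 (lamExp γ)]

lemma intble_mul_w {γ : ℝ} (hγ : 1 < γ) {f : ℝ → ℝ} (hf : Measurable f) {K : ℝ}
    (hb : ∀ s ∈ Set.uIoc (-1:ℝ) 1, |f s| ≤ K) :
    IntervalIntegrable (fun s => f s * (1 - s ^ 2) ^ lamExp γ) volume (-1) 1 := by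
  apply IntervalIntegrable.mono_fun' ((w_intble hγ).const_mul K)
    (hf.mul measurable_w).aestronglyMeasurable
  filter_upwards [ae_restrict_mem measurableSet_uIoc] with s hs
  obtain ⟨h1, h2⟩ := mem_Ioc_of_uIoc hs
  have h0 : 0 ≤ 1 - s ^ 2 := by nlinarith
  have hw : 0 ≤ (1 - s ^ 2) ^ lamExp γ := rpow_nonneg h0 _
  rw [Real.norm_eq_abs, Pi.mul_apply, abs_mul, abs_of_nonneg hw]
  exact mul_le_mul_of_nonneg_right (hb s hs) hw

lemma hasDerivAt_psi (x : ℝ) : HasDerivAt (fun y : ℝ => y * |y| / 2) |x| x := by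
  rcases lt_trichotomy x 0 with hx | hx | hx
  · have h1 : HasDerivAt (fun y : ℝ => -(y * y) / 2) (-x) x := by
      have := (((hasDerivAt_id x).mul (hasDerivAt_id x)).neg).div_const 2
      simpa using this.congr_deriv (by simp)
    have heq : (fun y : ℝ => y * |y| / 2) =ᶠ[nhds x] fun y => -(y * y) / 2 := by
      filter_upwards [Iio_mem_nhds hx] with y hy
      rw [abs_of_neg hy]; ring
    rw [abs_of_neg hx]
    exact h1.congr_of_eventuallyEq heq
  · subst hx
    rw [hasDerivAt_iff_tendsto_slope]
    have h2 : Filter.Tendsto (fun y : ℝ => |y| / 2) (nhdsWithin 0 {(0:ℝ)}ᶜ) (nhds |(0:ℝ)|) := by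
      have : Filter.Tendsto (fun y : ℝ => |y| / 2) (nhds 0) (nhds (|(0:ℝ)| / 2)) :=
        (continuous_abs.tendsto 0).div_const 2
      simpa using this.mono_left nhdsWithin_le_nhds
    apply h2.congr'
    filter_upwards [self_mem_nhdsWithin] with y hy
    have hy' : y ≠ 0 := hy
    simp only [slope_def_field]
    field_simp
    ring
  · have h1 : HasDerivAt (fun y : ℝ => y * y / 2) x x := by
      have := ((hasDerivAt_id x).mul (hasDerivAt_id x)).div_const 2
      simpa using this.congr_deriv (by simp)
    have heq : (fun y : ℝ => y * |y| / 2) =ᶠ[nhds x] fun y => y * y / 2 := by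
      filter_upwards [Ioi_mem_nhds hx] with y hy
      rw [abs_of_pos hy]
    rw [abs_of_pos hx]
    exact h1.congr_of_eventuallyEq heq

/-- For the relative entropy `η̃(ρ, m) = η̆(ρ, m) − c₀ρ∞^θ m`, the function `m ↦ η̃(ρ, m)`
is differentiable and `|∂_m η̃(ρ, m)| ≤ C(γ)(|ρ^θ − ρ∞^θ| + |m|/ρ)`. -/
theorem relEntropy_momentum_deriv_bound (γ : ℝ) (hγ : 1 < γ) :
    ∃ C : ℝ, 0 < C ∧ ∀ ρ : ℝ, 0 < ρ → ∀ ρinf : ℝ, 0 < ρinf → ∀ m : ℝ,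
      DifferentiableAt ℝ
        (fun m' => breveEntropyM γ ρ m' - cZero γ * ρinf ^ thetaExp γ * m') m ∧
      |deriv (fun m' => breveEntropyM γ ρ m' - cZero γ * ρinf ^ thetaExp γ * m') m| ≤
        C * (|ρ ^ thetaExp γ - ρinf ^ thetaExp γ| + |m| / ρ) := by
  set A : ℝ := ∫ s in (-1:ℝ)..1, (1 - s ^ 2) ^ lamExp γ with hA
  have hApos : 0 < A := by
    apply intervalIntegral.intervalIntegral_pos_of_pos_on (w_intble hγ)
      (fun x hx => rpow_pos_of_pos (by nlinarith [hx.1, hx.2]) _) (by norm_num)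
  refine ⟨A, hApos, ?_⟩
  intro ρ hρ ρinf hρinf m
  set c : ℝ := ρ ^ thetaExp γ with hc
  set b : ℝ := ρinf ^ thetaExp γ with hb
  have hcpos : 0 < c := rpow_pos_of_pos hρ _
  have hbpos : 0 < b := rpow_pos_of_pos hρinf _
  have hmeas_lin : ∀ x : ℝ, Measurable (fun s : ℝ => x / ρ + c * s) := fun x =>
    measurable_const.add (measurable_id.const_mul c)
  set I : ℝ := ∫ s in (-1:ℝ)..1, |m / ρ + c * s| * (1 - s ^ 2) ^ lamExp γ with hI
  -- derivative of the entropy part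
  have key : HasDerivAt (fun m' => breveEntropyM γ ρ m') I m := by
    have hmain := intervalIntegral.hasDerivAt_integral_of_dominated_loc_of_deriv_le
      (F := fun x s => (x / ρ + c * s) * |x / ρ + c * s| / 2 * (1 - s ^ 2) ^ lamExp γ)
      (F' := fun x s => |x / ρ + c * s| * (1 / ρ) * (1 - s ^ 2) ^ lamExp γ)
      (x₀ := m) (a := (-1:ℝ)) (b := (1:ℝ)) (μ := volume)
      (bound := fun s => ((|m| + 1) / ρ + c) * (1 / ρ) * (1 - s ^ 2) ^ lamExp γ)
      (s := Metric.ball m 1) (Metric.ball_mem_nhds m one_pos)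
      ?_ ?_ ?_ ?_ ?_ ?_
    · have h2 := hmain.2.const_mul ρ
      have heq : (fun x => ρ * ∫ s in (-1:ℝ)..1,
          (x / ρ + c * s) * |x / ρ + c * s| / 2 * (1 - s ^ 2) ^ lamExp γ) =
          fun m' => breveEntropyM γ ρ m' := by
        funext m'
        simp only [breveEntropyM, entropy, hc]
      rw [heq] at h2
      have hval : ρ * ∫ s in (-1:ℝ)..1,
          |m / ρ + c * s| * (1 / ρ) * (1 - s ^ 2) ^ lamExp γ = I := by
        have hfun : (fun s : ℝ => |m / ρ + c * s| * (1 / ρ) * (1 - s ^ 2) ^ lamExp γ) =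
            fun s => (1 / ρ) * (|m / ρ + c * s| * (1 - s ^ 2) ^ lamExp γ) := by
          funext s; ring
        rw [hfun, intervalIntegral.integral_const_mul, ← mul_assoc,
          mul_one_div_cancel hρ.ne', one_mul]
      rwa [hval] at h2
    · -- measurability of F x for x near m
      filter_upwards with x
      exact ((((hmeas_lin x).mul (hmeas_lin x).abs).div_const 2).mul
        measurable_w).aestronglyMeasurable
    · -- integrability of F m
      exact intble_mul_w hγ (((hmeas_lin m).mul (hmeas_lin m).abs).div_const 2)
        (K := (|m / ρ| + c) ^ 2 / 2) (fun s hs => by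
          obtain ⟨h1, h2⟩ := mem_Ioc_of_uIoc hs
          have hsabs : |s| ≤ 1 := abs_le.mpr ⟨h1.le, h2⟩
          have hz : |m / ρ + c * s| ≤ |m / ρ| + c := by
            calc |m / ρ + c * s| ≤ |m / ρ| + |c * s| := abs_add_le _ _
              _ ≤ |m / ρ| + c := by
                  rw [abs_mul, abs_of_pos hcpos]
                  nlinarith
          have : |(m / ρ + c * s) * |m / ρ + c * s| / 2| =
              |m / ρ + c * s| ^ 2 / 2 := by
            rw [abs_div, abs_mul, abs_abs]
            norm_num [sq]
          rw [this]
          have h0 : (0:ℝ) ≤ |m / ρ + c * s| := abs_nonneg _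
          nlinarith)
    · -- measurability of F' m
      exact (((hmeas_lin m).abs.mul_const (1 / ρ)).mul
        measurable_w).aestronglyMeasurable
    · -- bound
      filter_upwards with s hs x hx
      obtain ⟨h1, h2⟩ := mem_Ioc_of_uIoc hs
      have hw : 0 ≤ (1 - s ^ 2) ^ lamExp γ := rpow_nonneg (by nlinarith) _
      have hsabs : |s| ≤ 1 := abs_le.mpr ⟨h1.le, h2⟩
      have hxm : |x| ≤ |m| + 1 := by
        have := mem_ball_iff_norm.mp hx
        rw [Real.norm_eq_abs] at this
        calc |x| = |m + (x - m)| := by ring_nf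
          _ ≤ |m| + |x - m| := abs_add_le _ _
          _ ≤ |m| + 1 := by linarith
      have hz : |x / ρ + c * s| ≤ (|m| + 1) / ρ + c := by
        calc |x / ρ + c * s| ≤ |x / ρ| + |c * s| := abs_add_le _ _
          _ ≤ (|m| + 1) / ρ + c := by
              rw [abs_div, abs_of_pos hρ, abs_mul, abs_of_pos hcpos]
              have hdiv : |x| / ρ ≤ (|m| + 1) / ρ := by gcongr
              nlinarith [abs_nonneg x]
      rw [Real.norm_eq_abs, abs_mul, abs_mul, abs_abs, abs_of_pos (by positivity : (0:ℝ) < 1/ρ),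
        abs_of_nonneg hw]
      have h1ρ : (0:ℝ) ≤ 1 / ρ := by positivity
      have := mul_le_mul_of_nonneg_right (mul_le_mul_of_nonneg_right hz h1ρ) hw
      exact this
    · -- bound integrable
      exact (w_intble hγ).const_mul _
    · -- differentiability
      filter_upwards with s hs x hx
      have hlin : HasDerivAt (fun x : ℝ => x / ρ + c * s) (1 / ρ) x := by
        simpa using ((hasDerivAt_id x).div_const ρ).add_const (c * s)
      have hcomp := (hasDerivAt_psi (x / ρ + c * s)).comp x hlin
      exact hcomp.mul_const _
  -- derivative of the linear part
  have hlin : HasDerivAt (fun m' : ℝ => cZero γ * b * m') (cZero γ * b) m := by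
    simpa using (hasDerivAt_id m).const_mul (cZero γ * b)
  have htot : HasDerivAt
      (fun m' => breveEntropyM γ ρ m' - cZero γ * b * m') (I - cZero γ * b) m :=
    key.sub hlin
  refine ⟨htot.differentiableAt, ?_⟩
  rw [htot.deriv]
  -- rewrite I - c₀ b as a single integral
  have hI1 : IntervalIntegrable (fun s => |m / ρ + c * s| * (1 - s ^ 2) ^ lamExp γ)
      volume (-1) 1 :=
    intble_mul_w hγ (hmeas_lin m).abs (K := |m / ρ| + c) (fun s hs => by
      obtain ⟨h1, h2⟩ := mem_Ioc_of_uIoc hs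
      have hsabs : |s| ≤ 1 := abs_le.mpr ⟨h1.le, h2⟩
      rw [abs_abs]
      calc |m / ρ + c * s| ≤ |m / ρ| + |c * s| := abs_add_le _ _
        _ ≤ |m / ρ| + c := by
            rw [abs_mul, abs_of_pos hcpos]; nlinarith)
  have hI2 : IntervalIntegrable (fun s => b * |s| * (1 - s ^ 2) ^ lamExp γ)
      volume (-1) 1 :=
    intble_mul_w hγ (measurable_id.abs.const_mul b) (K := b) (fun s hs => by
      obtain ⟨h1, h2⟩ := mem_Ioc_of_uIoc hs
      have hsabs : |s| ≤ 1 := abs_le.mpr ⟨h1.le, h2⟩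
      rw [abs_mul, abs_of_pos hbpos, abs_abs]
      nlinarith)
  have hKb : cZero γ * b = ∫ s in (-1:ℝ)..1, b * |s| * (1 - s ^ 2) ^ lamExp γ := by
    rw [mul_comm, cZero, ← intervalIntegral.integral_const_mul]
    congr 1
    funext s
    ring
  have hsub : I - cZero γ * b =
      ∫ s in (-1:ℝ)..1, (|m / ρ + c * s| - b * |s|) * (1 - s ^ 2) ^ lamExp γ := by
    rw [hKb, hI, ← intervalIntegral.integral_sub hI1 hI2]
    congr 1
    funext s
    ring
  rw [hsub]
  have hbnd : |∫ s in (-1:ℝ)..1, (|m / ρ + c * s| - b * |s|) * (1 - s ^ 2) ^ lamExp γ| ≤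
      |∫ s in (-1:ℝ)..1, (|m / ρ| + |c - b|) * (1 - s ^ 2) ^ lamExp γ| := by
    rw [← Real.norm_eq_abs (∫ s in (-1:ℝ)..1, _)]
    apply intervalIntegral.norm_integral_le_abs_of_norm_le (hbound := (w_intble hγ).const_mul _)
    filter_upwards [ae_restrict_mem measurableSet_uIoc] with s hs
    obtain ⟨h1, h2⟩ := mem_Ioc_of_uIoc hs
    have hsabs : |s| ≤ 1 := abs_le.mpr ⟨h1.le, h2⟩
    have hw : 0 ≤ (1 - s ^ 2) ^ lamExp γ := rpow_nonneg (by nlinarith) _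
    rw [Real.norm_eq_abs, abs_mul, abs_of_nonneg hw]
    apply mul_le_mul_of_nonneg_right _ hw
    have h3 : b * |s| = |b * s| := by rw [abs_mul, abs_of_pos hbpos]
    rw [h3]
    calc abs (|m / ρ + c * s| - |b * s|) ≤ |m / ρ + c * s - b * s| :=
          abs_abs_sub_abs_le_abs_sub _ _
      _ = |m / ρ + (c - b) * s| := by ring_nf
      _ ≤ |m / ρ| + |(c - b) * s| := abs_add_le _ _
      _ ≤ |m / ρ| + |c - b| := by
          rw [abs_mul]
          nlinarith [abs_nonneg (c - b)]
  have hval2 : |∫ s in (-1:ℝ)..1, (|m / ρ| + |c - b|) * (1 - s ^ 2) ^ lamExp γ| =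
      (|m / ρ| + |c - b|) * A := by
    rw [intervalIntegral.integral_const_mul, ← hA, abs_of_nonneg]
    positivity
  have hmρ : |m / ρ| = |m| / ρ := by rw [abs_div, abs_of_pos hρ]
  calc |∫ s in (-1:ℝ)..1, (|m / ρ + c * s| - b * |s|) * (1 - s ^ 2) ^ lamExp γ|
      ≤ (|m / ρ| + |c - b|) * A := hbnd.trans hval2.le
    _ = A * (|c - b| + |m| / ρ) := by rw [hmρ]; ring
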